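/- Let α < β be real numbers, A ∈ ℝ^{n×n}, g ∈ ℝ^{n×l}, Y ∈ ℝ^{l×n}, W¹ ∈ ℝ^{m×n}, W_min ∈ ℝ^{n×m}, b¹ ∈ ℝᵐ, c ∈ ℝⁿ, and let φ : ℝ → ℝ be incrementally sector bounded by [α, β] on ℝ with componentwise application Φ : ℝᵐ → ℝᵐ. Suppose there exist a symmetric positive definite S ∈ ℝ^{n×n} and constants 0 < s̲ ≤ s̄, μ > 0 with s̲·I ⪯ S ⪯ s̄·I such that, with R̄ = AS + SAᵀ + gY + Yᵀgᵀ − (2αβ/(β−α)²)·W_min·W_minᵀ and R̃ = ((α+β)/(β−α))·W_min + (β−α)·S·W¹ᵀ, the symmetric block matrix [[−μ·Iₙ, S, 0], [S, R̄, R̃], [0, R̃ᵀ, −2·I_m]] ⪯ 0. Then, setting H = Y·S⁻¹, any two differentiable functions x₁, x₂ : [0,∞) → ℝⁿ satisfying ẋ(t) = (A + gH)·x(t) + W_min·Φ(W¹·x(t) + b¹) + c for all t ≥ 0 satisfy ‖x₁(t) − x₂(t)‖ ≤ √(s̄/s̲)·e^{−(s̲/(2μ))·t}·‖x₁(0) −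 x₂(0)‖ for all t ≥ 0. -/

import Mathlib

open Matrix

/-- The Euclidean norm of a vector in `ℝⁿ`. -/
noncomputable def eNorm {n : ℕ} (v : Fin n → ℝ) : ℝ := Real.sqrt (v ⬝ᵥ v)

lemma symm_dot_comm {n : ℕ} {M : Matrix (Fin n) (Fin n) ℝ} (hMT : Mᵀ = M)
    (a b : Fin n → ℝ) : a ⬝ᵥ M.mulVec b = b ⬝ᵥ M.mulVec a := by
  rw [dotProduct_mulVec, ← mulVec_transpose, hMT, dotProduct_comm]

lemma sum_elim_add {n m : Type*} (u x : n → ℝ) (v y : m → ℝ) :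
    Sum.elim u v + Sum.elim x y = Sum.elim (u + x) (v + y) := by
  ext (i | i) <;> simp

lemma quad_key {n l m : ℕ} {α β : ℝ} (hαβ : α < β)
    (A : Matrix (Fin n) (Fin n) ℝ)
    (g : Matrix (Fin n) (Fin l) ℝ) (Y : Matrix (Fin l) (Fin n) ℝ)
    (W1 : Matrix (Fin m) (Fin n) ℝ) (Wmin : Matrix (Fin n) (Fin m) ℝ)
    (S : Matrix (Fin n) (Fin n) ℝ) (hS : S.PosDef)
    {μ : ℝ} (hμ : 0 < μ)
    (hLMI : (-(Matrix.fromBlocks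
        (Matrix.fromBlocks (-μ • (1 : Matrix (Fin n) (Fin n) ℝ)) S
          S (A * S + S * Aᵀ + g * Y + Yᵀ * gᵀ
              - (2 * α * β / (β - α) ^ 2) • (Wmin * Wminᵀ)))
        (Matrix.fromRows (0 : Matrix (Fin n) (Fin m) ℝ)
          (((α + β) / (β - α)) • Wmin + (β - α) • (S * W1ᵀ)))
        (Matrix.fromCols (0 : Matrix (Fin m) (Fin n) ℝ)
          ((((α + β) / (β - α)) • Wmin + (β - α) • (S * W1ᵀ))ᵀ))
        (-(2 : ℝ) • (1 : Matrix (Fin m) (Fin m) ℝ)))).PosSemidef)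
    (ee : Fin n → ℝ) (D : Fin m → ℝ)
    (hsecD : ∀ j, (D j - α * (W1 *ᵥ ee) j) * (D j - β * (W1 *ᵥ ee) j) ≤ 0) :
    2 * ((S⁻¹ *ᵥ ee) ⬝ᵥ ((A + g * (Y * S⁻¹)) *ᵥ ee + Wmin *ᵥ D)) ≤ -(μ⁻¹ * (ee ⬝ᵥ ee)) := by
  have hγ : β - α ≠ 0 := sub_ne_zero.2 (ne_of_gt hαβ)
  have hdet : IsUnit S.det := isUnit_iff_ne_zero.2 (ne_of_gt hS.det_pos)
  have hSP : S * S⁻¹ = 1 := Matrix.mul_nonsing_inv S hdet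
  have hST : Sᵀ = S := by
    have := hS.isHermitian
    rw [Matrix.IsHermitian, conjTranspose_eq_transpose_of_trivial] at this; exact this
  set P := S⁻¹ with hPdef
  have hPT : Pᵀ = P := by rw [hPdef, Matrix.transpose_nonsing_inv, hST]
  set p := P *ᵥ ee with hp
  have hSp : S *ᵥ p = ee := by rw [hp, mulVec_mulVec, hSP, one_mulVec]
  set u := Wminᵀ *ᵥ p with hu
  set q := W1 *ᵥ ee with hq
  set w := D + (α / (β - α)) • u - α • q with hw
  set z := μ⁻¹ • ee with hz
  -- basic dot product translations
  have hWdot : ∀ x : Fin m → ℝ, p ⬝ᵥ Wmin *ᵥ x = u ⬝ᵥ x := by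
    intro x; rw [dotProduct_mulVec, ← mulVec_transpose, hu]
  have hSdot : ∀ x : Fin n → ℝ, p ⬝ᵥ S *ᵥ x = ee ⬝ᵥ x := by
    intro x; rw [symm_dot_comm hST, hSp, dotProduct_comm]
  -- the LMI quadratic form applied to ξ
  have hq0 : (Sum.elim (Sum.elim z p) w) ⬝ᵥ (Matrix.fromBlocks
        (Matrix.fromBlocks (-μ • (1 : Matrix (Fin n) (Fin n) ℝ)) S
          S (A * S + S * Aᵀ + g * Y + Yᵀ * gᵀ
              - (2 * α * β / (β - α) ^ 2) • (Wmin * Wminᵀ)))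
        (Matrix.fromRows (0 : Matrix (Fin n) (Fin m) ℝ)
          (((α + β) / (β - α)) • Wmin + (β - α) • (S * W1ᵀ)))
        (Matrix.fromCols (0 : Matrix (Fin m) (Fin n) ℝ)
          ((((α + β) / (β - α)) • Wmin + (β - α) • (S * W1ᵀ))ᵀ))
        (-(2 : ℝ) • (1 : Matrix (Fin m) (Fin m) ℝ))) *ᵥ (Sum.elim (Sum.elim z p) w) ≤ 0 := by
    have h := hLMI.dotProduct_mulVec_nonneg (Sum.elim (Sum.elim z p) w)
    rw [neg_mulVec, dotProduct_neg, star_trivial] at h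
    linarith
  simp only [fromBlocks_mulVec, Sum.elim_comp_inl, Sum.elim_comp_inr, fromRows_mulVec,
    fromCols_mulVec_sumElim, zero_mulVec, add_zero, zero_add, sum_elim_add,
    sumElim_dotProduct_sumElim, dotProduct_add, add_mulVec, sub_mulVec, smul_mulVec,
    one_mulVec, dotProduct_smul, smul_eq_mul, dotProduct_sub, transpose_add, transpose_smul,
    transpose_mul, transpose_transpose] at hq0
  -- per-term rewrites
  have hzz : z ⬝ᵥ z = μ⁻¹ * (μ⁻¹ * (ee ⬝ᵥ ee)) := by
    rw [hz, smul_dotProduct, dotProduct_smul, smul_eq_mul, smul_eq_mul]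
  have hzSp : z ⬝ᵥ S *ᵥ p = μ⁻¹ * (ee ⬝ᵥ ee) := by
    rw [hz, smul_dotProduct, smul_eq_mul, hSp]
  have hpSz : p ⬝ᵥ S *ᵥ z = μ⁻¹ * (ee ⬝ᵥ ee) := by
    rw [hSdot z, hz, dotProduct_smul, smul_eq_mul]
  have hAS : p ⬝ᵥ (A * S) *ᵥ p = p ⬝ᵥ A *ᵥ ee := by
    rw [← mulVec_mulVec, hSp]
  have hSA : p ⬝ᵥ (S * Aᵀ) *ᵥ p = p ⬝ᵥ A *ᵥ ee := by
    rw [← mulVec_mulVec, hSdot, dotProduct_mulVec, vecMul_transpose, dotProduct_comm]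
  have hYp : Y *ᵥ p = (Y * P) *ᵥ ee := by rw [hp, mulVec_mulVec]
  have hgY : p ⬝ᵥ (g * Y) *ᵥ p = p ⬝ᵥ (g * (Y * P)) *ᵥ ee := by
    rw [← mulVec_mulVec, hYp, mulVec_mulVec]
  have hYg : p ⬝ᵥ (Yᵀ * gᵀ) *ᵥ p = p ⬝ᵥ (g * (Y * P)) *ᵥ ee := by
    rw [← transpose_mul, dotProduct_mulVec, vecMul_transpose, dotProduct_comm ((g * Y) *ᵥ p) p,
      hgY]
  have hWW : p ⬝ᵥ (Wmin * Wminᵀ) *ᵥ p = u ⬝ᵥ u := by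
    rw [← mulVec_mulVec, hWdot, ← hu]
  have hpSW1 : p ⬝ᵥ (S * W1ᵀ) *ᵥ w = q ⬝ᵥ w := by
    rw [← mulVec_mulVec, hSdot, dotProduct_mulVec, vecMul_transpose, ← hq]
  have hwWp : w ⬝ᵥ Wminᵀ *ᵥ p = u ⬝ᵥ w := by
    rw [← hu, dotProduct_comm]
  have hwW1S : w ⬝ᵥ (W1 * Sᵀ) *ᵥ p = q ⬝ᵥ w := by
    rw [hST, ← mulVec_mulVec, hSp, ← hq, dotProduct_comm]
  rw [hzz, hzSp, hpSz, hAS, hSA, hgY, hYg, hWW, hWdot w, hpSW1, hwWp, hwW1S] at hq0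
  -- expand w
  have huw : u ⬝ᵥ w = u ⬝ᵥ D + α / (β - α) * (u ⬝ᵥ u) - α * (u ⬝ᵥ q) := by
    rw [hw]
    simp only [dotProduct_add, dotProduct_sub, dotProduct_smul, smul_eq_mul]
  have hqw : q ⬝ᵥ w = q ⬝ᵥ D + α / (β - α) * (u ⬝ᵥ q) - α * (q ⬝ᵥ q) := by
    rw [hw]
    simp only [dotProduct_add, dotProduct_sub, dotProduct_smul, smul_eq_mul,
      dotProduct_comm q u]
  have hww : w ⬝ᵥ w = D ⬝ᵥ D + (α / (β - α)) ^ 2 * (u ⬝ᵥ u) + α ^ 2 * (q ⬝ᵥ q)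
      + 2 * (α / (β - α)) * (u ⬝ᵥ D) - 2 * α * (q ⬝ᵥ D)
      - 2 * (α ^ 2 / (β - α)) * (u ⬝ᵥ q) := by
    rw [hw]
    simp only [dotProduct_add, dotProduct_sub, dotProduct_smul, smul_eq_mul,
      add_dotProduct, sub_dotProduct, smul_dotProduct]
    rw [dotProduct_comm D u, dotProduct_comm D q, dotProduct_comm q u]
    ring
  rw [huw, hqw, hww] at hq0
  -- sector bound
  have hsec2 : D ⬝ᵥ D - (α + β) * (q ⬝ᵥ D) + α * β * (q ⬝ᵥ q) ≤ 0 := by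
    have hrw : D ⬝ᵥ D - (α + β) * (q ⬝ᵥ D) + α * β * (q ⬝ᵥ q)
        = ∑ j, (D j - α * q j) * (D j - β * q j) := by
      simp only [dotProduct, Finset.mul_sum, ← Finset.sum_sub_distrib, ← Finset.sum_add_distrib]
      exact Finset.sum_congr rfl fun j _ => by ring
    rw [hrw]
    exact Finset.sum_nonpos fun j _ => hsecD j
  -- goal expansion
  rw [dotProduct_add, add_mulVec, dotProduct_add, hWdot D]
  have hμ0 : μ ≠ 0 := ne_of_gt hμ
  set e2 := ee ⬝ᵥ ee with he2
  set a1 := p ⬝ᵥ A *ᵥ ee with ha1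
  set a2 := p ⬝ᵥ (g * (Y * P)) *ᵥ ee with ha2
  set cuu := u ⬝ᵥ u with hcuu
  set cud := u ⬝ᵥ D with hcud
  set cuq := u ⬝ᵥ q with hcuq
  set cqd := q ⬝ᵥ D with hcqd
  set cqq := q ⬝ᵥ q with hcqq
  set cdd := D ⬝ᵥ D with hcdd
  have hkey : 2 * (a1 + a2 + cud) + μ⁻¹ * e2
      = (-μ * (μ⁻¹ * (μ⁻¹ * e2)) + μ⁻¹ * e2 +
        (μ⁻¹ * e2 + (a1 + a1 + a2 + a2 - 2 * α * β / (β - α) ^ 2 * cuu) +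
          ((α + β) / (β - α) * (cud + α / (β - α) * cuu - α * cuq) +
            (β - α) * (cqd + α / (β - α) * cuq - α * cqq))) +
      ((α + β) / (β - α) * (cud + α / (β - α) * cuu - α * cuq) +
          (β - α) * (cqd + α / (β - α) * cuq - α * cqq) +
        -2 * (cdd + (α / (β - α)) ^ 2 * cuu + α ^ 2 * cqq + 2 * (α / (β - α)) * cud
          - 2 * α * cqd - 2 * (α ^ 2 / (β - α)) * cuq)))
      + 2 * (cdd - (α + β) * cqd + α * β * cqq) := by
    field_simp
    ring
  linarith [hq0, hsec2, hkey]

lemma psd_cauchy_schwarz {n : ℕ} {M : Matrix (Fin n) (Fin n) ℝ} (hM : M.PosSemidef)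
    (x y : Fin n → ℝ) :
    (x ⬝ᵥ M.mulVec y) ^ 2 ≤ (x ⬝ᵥ M.mulVec x) * (y ⬝ᵥ M.mulVec y) := by
  have hMT : Mᵀ = M := by
    have := hM.1
    rw [Matrix.IsHermitian, conjTranspose_eq_transpose_of_trivial] at this; exact this
  have hsym := symm_dot_comm hMT
  have h : ∀ t : ℝ, 0 ≤ (y ⬝ᵥ M.mulVec y) * (t * t) + (2 * (x ⬝ᵥ M.mulVec y)) * t
      + x ⬝ᵥ M.mulVec x := by
    intro t
    have h0 := hM.dotProduct_mulVec_nonneg (x + t • y)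
    simp only [star_trivial, mulVec_add, mulVec_smul, dotProduct_add, add_dotProduct,
      dotProduct_smul, smul_dotProduct, smul_eq_mul] at h0
    rw [hsym y x] at h0
    linarith
  have := discrim_le_zero h
  rw [discrim] at this
  nlinarith

/-- Theorem 5: with `H = Y S⁻¹`, the convex LMI condition on `S, Y, μ`
guarantees contraction of the controlled Hopfield system
`ẋ = (A + gH) x + W_min Φ(W¹ x + b¹) + c`. -/
theorem controlled_hopfield_contractive_LMI
    (n l m : ℕ) (α β : ℝ) (hαβ : α < β)
    (A : Matrix (Fin n) (Fin n) ℝ)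
    (g : Matrix (Fin n) (Fin l) ℝ) (Y : Matrix (Fin l) (Fin n) ℝ)
    (W1 : Matrix (Fin m) (Fin n) ℝ) (Wmin : Matrix (Fin n) (Fin m) ℝ)
    (b1 : Fin m → ℝ) (c : Fin n → ℝ)
    (φ : ℝ → ℝ)
    (hsec : ∀ a d : ℝ, (φ a - φ d - α * (a - d)) * (φ a - φ d - β * (a - d)) ≤ 0)
    (S : Matrix (Fin n) (Fin n) ℝ) (hS : S.PosDef)
    (s₁ s₂ μ : ℝ) (hs₁ : 0 < s₁) (hs₁₂ : s₁ ≤ s₂) (hμ : 0 < μ)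
    (hSlo : (S - s₁ • (1 : Matrix (Fin n) (Fin n) ℝ)).PosSemidef)
    (hShi : (s₂ • (1 : Matrix (Fin n) (Fin n) ℝ) - S).PosSemidef)
    (hLMI : (-(Matrix.fromBlocks
        (Matrix.fromBlocks (-μ • (1 : Matrix (Fin n) (Fin n) ℝ)) S
          S (A * S + S * Aᵀ + g * Y + Yᵀ * gᵀ
              - (2 * α * β / (β - α) ^ 2) • (Wmin * Wminᵀ)))
        (Matrix.fromRows (0 : Matrix (Fin n) (Fin m) ℝ)
          (((α + β) / (β - α)) • Wmin + (β - α) • (S * W1ᵀ)))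
        (Matrix.fromCols (0 : Matrix (Fin m) (Fin n) ℝ)
          ((((α + β) / (β - α)) • Wmin + (β - α) • (S * W1ᵀ))ᵀ))
        (-(2 : ℝ) • (1 : Matrix (Fin m) (Fin m) ℝ)))).PosSemidef)
    (x₁ x₂ : ℝ → Fin n → ℝ)
    (hx₁ : ∀ t, 0 ≤ t → HasDerivAt x₁
      ((A + g * (Y * S⁻¹)).mulVec (x₁ t)
        + Wmin.mulVec (fun j => φ (W1.mulVec (x₁ t) j + b1 j)) + c) t)
    (hx₂ : ∀ t, 0 ≤ t → HasDerivAt x₂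
      ((A + g * (Y * S⁻¹)).mulVec (x₂ t)
        + Wmin.mulVec (fun j => φ (W1.mulVec (x₂ t) j + b1 j)) + c) t) :
    ∀ t, 0 ≤ t →
      eNorm (x₁ t - x₂ t) ≤
        Real.sqrt (s₂ / s₁) * Real.exp (-(s₁ / (2 * μ)) * t) * eNorm (x₁ 0 - x₂ 0) := by
  have hγ : β - α ≠ 0 := sub_ne_zero.2 (ne_of_gt hαβ)
  have hdet : IsUnit S.det := isUnit_iff_ne_zero.2 (ne_of_gt hS.det_pos)
  have hSP : S * S⁻¹ = 1 := Matrix.mul_nonsing_inv S hdet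
  have hST : Sᵀ = S := by
    have := hS.isHermitian
    rw [Matrix.IsHermitian, conjTranspose_eq_transpose_of_trivial] at this; exact this
  have hPT : (S⁻¹)ᵀ = S⁻¹ := by rw [Matrix.transpose_nonsing_inv, hST]
  have hPsd : (S⁻¹).PosDef := hS.inv
  have hSp : ∀ v : Fin n → ℝ, S *ᵥ (S⁻¹ *ᵥ v) = v := fun v => by
    rw [mulVec_mulVec, hSP, one_mulVec]
  have hdotnn : ∀ {k : ℕ} (v : Fin k → ℝ), 0 ≤ v ⬝ᵥ v := fun v =>
    Finset.sum_nonneg fun i _ => mul_self_nonneg (v i)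
  have hVnn : ∀ v : Fin n → ℝ, 0 ≤ v ⬝ᵥ S⁻¹ *ᵥ v := fun v => by
    have := hPsd.posSemidef.dotProduct_mulVec_nonneg v
    simpa using this
  -- upper bound : s₁ * (vᵀ S⁻¹ v) ≤ vᵀ v
  have hub : ∀ v : Fin n → ℝ, s₁ * (v ⬝ᵥ S⁻¹ *ᵥ v) ≤ v ⬝ᵥ v := by
    intro v
    have hSpv : S *ᵥ (S⁻¹ *ᵥ v) = v := hSp v
    have h1 : 0 ≤ (S⁻¹ *ᵥ v) ⬝ᵥ (S - s₁ • 1) *ᵥ (S⁻¹ *ᵥ v) := by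
      have := hSlo.dotProduct_mulVec_nonneg (S⁻¹ *ᵥ v)
      simpa using this
    have h2 : (S⁻¹ *ᵥ v) ⬝ᵥ (S - s₁ • 1) *ᵥ (S⁻¹ *ᵥ v)
        = v ⬝ᵥ S⁻¹ *ᵥ v - s₁ * ((S⁻¹ *ᵥ v) ⬝ᵥ (S⁻¹ *ᵥ v)) := by
      rw [sub_mulVec, dotProduct_sub, smul_mulVec, one_mulVec, dotProduct_smul,
        smul_eq_mul, hSpv, dotProduct_comm]
    have h1' : s₁ * ((S⁻¹ *ᵥ v) ⬝ᵥ (S⁻¹ *ᵥ v)) ≤ v ⬝ᵥ S⁻¹ *ᵥ v := by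
      rw [h2] at h1; linarith
    have hcs := psd_cauchy_schwarz (Matrix.PosSemidef.one) (S⁻¹ *ᵥ v) v
    rw [one_mulVec, one_mulVec, dotProduct_comm (S⁻¹ *ᵥ v) v] at hcs
    rcases (hVnn v).eq_or_lt with hV0 | hVpos
    · rw [← hV0, mul_zero]; exact hdotnn v
    · have hint1 := mul_le_mul_of_nonneg_right h1' (hdotnn v)
      have hint2 := mul_le_mul_of_nonneg_left hcs hs₁.le
      have key : (s₁ * (v ⬝ᵥ S⁻¹ *ᵥ v)) * (v ⬝ᵥ S⁻¹ *ᵥ v) ≤ (v ⬝ᵥ v) * (v ⬝ᵥ S⁻¹ *ᵥ v) := by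
        nlinarith [hint1, hint2]
      exact le_of_mul_le_mul_right key hVpos
  -- lower bound : vᵀ v ≤ s₂ * (vᵀ S⁻¹ v)
  have hlb : ∀ v : Fin n → ℝ, v ⬝ᵥ v ≤ s₂ * (v ⬝ᵥ S⁻¹ *ᵥ v) := by
    intro v
    have hSpv : S *ᵥ (S⁻¹ *ᵥ v) = v := hSp v
    have hcs := psd_cauchy_schwarz hS.posSemidef (S⁻¹ *ᵥ v) v
    have e1 : (S⁻¹ *ᵥ v) ⬝ᵥ S *ᵥ v = v ⬝ᵥ v := by
      rw [symm_dot_comm hST, hSpv]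
    have e2 : (S⁻¹ *ᵥ v) ⬝ᵥ S *ᵥ (S⁻¹ *ᵥ v) = v ⬝ᵥ S⁻¹ *ᵥ v := by
      rw [symm_dot_comm hST, hSpv, dotProduct_comm]
    have e3 : v ⬝ᵥ S *ᵥ v ≤ s₂ * (v ⬝ᵥ v) := by
      have := hShi.dotProduct_mulVec_nonneg v
      simp only [star_trivial, sub_mulVec, dotProduct_sub, smul_mulVec, one_mulVec,
        dotProduct_smul, smul_eq_mul] at this
      linarith
    rw [e1, e2] at hcs
    have h4 : (v ⬝ᵥ S⁻¹ *ᵥ v) * (v ⬝ᵥ S *ᵥ v) ≤ (v ⬝ᵥ S⁻¹ *ᵥ v) * (s₂ * (v ⬝ᵥ v)) :=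
      mul_le_mul_of_nonneg_left e3 (hVnn v)
    nlinarith [hcs, h4, hVnn v, hdotnn v,
      mul_nonneg (le_of_lt (hs₁.trans_le hs₁₂)) (hVnn v)]
  -- derivative of the error
  have hder : ∀ t, 0 ≤ t → HasDerivAt (fun s => x₁ s - x₂ s)
      ((A + g * (Y * S⁻¹)) *ᵥ (x₁ t - x₂ t)
        + Wmin *ᵥ (fun j => φ ((W1 *ᵥ x₁ t) j + b1 j) - φ ((W1 *ᵥ x₂ t) j + b1 j))) t := by
    intro t ht
    have h := (hx₁ t ht).sub (hx₂ t ht)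
    refine h.congr_deriv ?_
    rw [mulVec_sub]
    have hW : Wmin *ᵥ (fun j => φ ((W1 *ᵥ x₁ t) j + b1 j) - φ ((W1 *ᵥ x₂ t) j + b1 j))
        = Wmin *ᵥ (fun j => φ ((W1 *ᵥ x₁ t) j + b1 j))
          - Wmin *ᵥ (fun j => φ ((W1 *ᵥ x₂ t) j + b1 j)) := by
      rw [← mulVec_sub]
      rfl
    rw [hW]
    abel
  -- derivative of the Lyapunov function
  have hVder : ∀ t, 0 ≤ t → HasDerivAt (fun s => (x₁ s - x₂ s) ⬝ᵥ S⁻¹ *ᵥ (x₁ s - x₂ s))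
      (2 * ((S⁻¹ *ᵥ (x₁ t - x₂ t)) ⬝ᵥ ((A + g * (Y * S⁻¹)) *ᵥ (x₁ t - x₂ t)
        + Wmin *ᵥ (fun j => φ ((W1 *ᵥ x₁ t) j + b1 j) - φ ((W1 *ᵥ x₂ t) j + b1 j))))) t := by
    intro t ht
    have hde := hder t ht
    set d := (A + g * (Y * S⁻¹)) *ᵥ (x₁ t - x₂ t)
        + Wmin *ᵥ (fun j => φ ((W1 *ᵥ x₁ t) j + b1 j) - φ ((W1 *ᵥ x₂ t) j + b1 j)) with hd
    have hcomp : ∀ i, HasDerivAt (fun s => x₁ s i - x₂ s i) (d i) t := by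
      intro i
      have := hasDerivAt_pi.1 hde i
      simpa using this
    have hsum : HasDerivAt (fun s => ∑ i, (x₁ s i - x₂ s i) * (∑ j, S⁻¹ i j * (x₁ s j - x₂ s j)))
        (∑ i, (d i * (∑ j, S⁻¹ i j * (x₁ t j - x₂ t j))
          + (x₁ t i - x₂ t i) * (∑ j, S⁻¹ i j * d j))) t := by
      apply HasDerivAt.fun_sum
      intro i _
      exact (hcomp i).mul (HasDerivAt.fun_sum fun j _ => (hcomp j).const_mul (S⁻¹ i j))
    have hfun : (fun s => (x₁ s - x₂ s) ⬝ᵥ S⁻¹ *ᵥ (x₁ s - x₂ s))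
        = (fun s => ∑ i, (x₁ s i - x₂ s i) * (∑ j, S⁻¹ i j * (x₁ s j - x₂ s j))) := by
      funext s
      simp [dotProduct, mulVec, Pi.sub_apply]
    rw [hfun]
    convert hsum using 1
    have e1 : (∑ i, d i * (∑ j, S⁻¹ i j * (x₁ t j - x₂ t j)))
        = d ⬝ᵥ S⁻¹ *ᵥ (x₁ t - x₂ t) := by
      simp [dotProduct, mulVec, Pi.sub_apply]
    have e2 : (∑ i, (x₁ t i - x₂ t i) * (∑ j, S⁻¹ i j * d j))
        = (x₁ t - x₂ t) ⬝ᵥ S⁻¹ *ᵥ d := by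
      simp [dotProduct, mulVec, Pi.sub_apply]
    rw [Finset.sum_add_distrib, e1, e2, symm_dot_comm hPT (x₁ t - x₂ t) d,
      dotProduct_comm d (S⁻¹ *ᵥ (x₁ t - x₂ t))]
    ring
  -- decay bound on the derivative
  have hbound : ∀ t, 0 ≤ t →
      2 * ((S⁻¹ *ᵥ (x₁ t - x₂ t)) ⬝ᵥ ((A + g * (Y * S⁻¹)) *ᵥ (x₁ t - x₂ t)
        + Wmin *ᵥ (fun j => φ ((W1 *ᵥ x₁ t) j + b1 j) - φ ((W1 *ᵥ x₂ t) j + b1 j))))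
      ≤ -(s₁ / μ * ((x₁ t - x₂ t) ⬝ᵥ S⁻¹ *ᵥ (x₁ t - x₂ t))) := by
    intro t ht
    have hsecD : ∀ j, ((fun j => φ ((W1 *ᵥ x₁ t) j + b1 j) - φ ((W1 *ᵥ x₂ t) j + b1 j)) j
        - α * (W1 *ᵥ (x₁ t - x₂ t)) j)
        * ((fun j => φ ((W1 *ᵥ x₁ t) j + b1 j) - φ ((W1 *ᵥ x₂ t) j + b1 j)) j
        - β * (W1 *ᵥ (x₁ t - x₂ t)) j) ≤ 0 := by
      intro j
      have hx : (W1 *ᵥ (x₁ t - x₂ t)) j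
          = ((W1 *ᵥ x₁ t) j + b1 j) - ((W1 *ᵥ x₂ t) j + b1 j) := by
        rw [mulVec_sub]; simp
      rw [hx]
      exact hsec _ _
    have hqk := quad_key hαβ A g Y W1 Wmin S hS hμ hLMI (x₁ t - x₂ t)
      (fun j => φ ((W1 *ᵥ x₁ t) j + b1 j) - φ ((W1 *ᵥ x₂ t) j + b1 j)) hsecD
    have hm : μ⁻¹ * (s₁ * ((x₁ t - x₂ t) ⬝ᵥ S⁻¹ *ᵥ (x₁ t - x₂ t)))
        ≤ μ⁻¹ * ((x₁ t - x₂ t) ⬝ᵥ (x₁ t - x₂ t)) :=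
      mul_le_mul_of_nonneg_left (hub (x₁ t - x₂ t)) (inv_nonneg.2 hμ.le)
    have hr : s₁ / μ * ((x₁ t - x₂ t) ⬝ᵥ S⁻¹ *ᵥ (x₁ t - x₂ t))
        = μ⁻¹ * (s₁ * ((x₁ t - x₂ t) ⬝ᵥ S⁻¹ *ᵥ (x₁ t - x₂ t))) := by ring
    rw [hr]
    linarith [hqk, hm]
  -- Gronwall via antitonicity
  have hG : ∀ t, 0 ≤ t → HasDerivAt
      (fun s => ((x₁ s - x₂ s) ⬝ᵥ S⁻¹ *ᵥ (x₁ s - x₂ s)) * Real.exp (s₁ / μ * s))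
      (2 * ((S⁻¹ *ᵥ (x₁ t - x₂ t)) ⬝ᵥ ((A + g * (Y * S⁻¹)) *ᵥ (x₁ t - x₂ t)
        + Wmin *ᵥ (fun j => φ ((W1 *ᵥ x₁ t) j + b1 j) - φ ((W1 *ᵥ x₂ t) j + b1 j))))
        * Real.exp (s₁ / μ * t)
        + ((x₁ t - x₂ t) ⬝ᵥ S⁻¹ *ᵥ (x₁ t - x₂ t)) * (Real.exp (s₁ / μ * t) * (s₁ / μ))) t := by
    intro t ht
    have hexp : HasDerivAt (fun s : ℝ => Real.exp (s₁ / μ * s))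
        (Real.exp (s₁ / μ * t) * (s₁ / μ)) t := by
      simpa using ((hasDerivAt_id t).const_mul (s₁ / μ)).exp
    exact (hVder t ht).mul hexp
  have hmono : AntitoneOn
      (fun s => ((x₁ s - x₂ s) ⬝ᵥ S⁻¹ *ᵥ (x₁ s - x₂ s)) * Real.exp (s₁ / μ * s))
      (Set.Ici 0) := by
    apply antitoneOn_of_deriv_nonpos (convex_Ici 0)
    · intro t ht
      exact (hG t ht).continuousAt.continuousWithinAt
    · rw [interior_Ici]
      intro t ht
      exact (hG t (le_of_lt ht)).differentiableAt.differentiableWithinAt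
    · rw [interior_Ici]
      intro t ht
      rw [(hG t (le_of_lt ht)).deriv]
      have hb := hbound t (le_of_lt ht)
      have hexp := Real.exp_pos (s₁ / μ * t)
      nlinarith [hb, hexp, hVnn (x₁ t - x₂ t)]
  -- conclusion
  intro t ht
  have h1 : ((x₁ t - x₂ t) ⬝ᵥ S⁻¹ *ᵥ (x₁ t - x₂ t)) * Real.exp (s₁ / μ * t)
      ≤ (x₁ 0 - x₂ 0) ⬝ᵥ S⁻¹ *ᵥ (x₁ 0 - x₂ 0) := by
    have := hmono (Set.self_mem_Ici) (Set.mem_Ici.2 ht) ht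
    simpa using this
  have hVt : (x₁ t - x₂ t) ⬝ᵥ S⁻¹ *ᵥ (x₁ t - x₂ t)
      ≤ ((x₁ 0 - x₂ 0) ⬝ᵥ S⁻¹ *ᵥ (x₁ 0 - x₂ 0)) * Real.exp (-(s₁ / μ * t)) := by
    have h2 := mul_le_mul_of_nonneg_right h1 (Real.exp_pos (-(s₁ / μ * t))).le
    calc (x₁ t - x₂ t) ⬝ᵥ S⁻¹ *ᵥ (x₁ t - x₂ t)
        = ((x₁ t - x₂ t) ⬝ᵥ S⁻¹ *ᵥ (x₁ t - x₂ t))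
          * (Real.exp (s₁ / μ * t) * Real.exp (-(s₁ / μ * t))) := by
          rw [← Real.exp_add]; simp
      _ ≤ ((x₁ 0 - x₂ 0) ⬝ᵥ S⁻¹ *ᵥ (x₁ 0 - x₂ 0)) * Real.exp (-(s₁ / μ * t)) := by
          rw [← mul_assoc]; exact h2
  have hA : (x₁ t - x₂ t) ⬝ᵥ (x₁ t - x₂ t)
      ≤ s₂ / s₁ * Real.exp (-(s₁ / μ * t)) * ((x₁ 0 - x₂ 0) ⬝ᵥ (x₁ 0 - x₂ 0)) := by
    have l1 := hlb (x₁ t - x₂ t)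
    have l2 := hub (x₁ 0 - x₂ 0)
    have hs₂ : (0:ℝ) ≤ s₂ := le_of_lt (hs₁.trans_le hs₁₂)
    have hEp := (Real.exp_pos (-(s₁ / μ * t))).le
    have c2 : (x₁ 0 - x₂ 0) ⬝ᵥ S⁻¹ *ᵥ (x₁ 0 - x₂ 0)
        ≤ ((x₁ 0 - x₂ 0) ⬝ᵥ (x₁ 0 - x₂ 0)) / s₁ := by
      rw [le_div_iff₀ hs₁]; linarith [l2]
    have c3 := mul_le_mul_of_nonneg_right c2 hEp
    calc (x₁ t - x₂ t) ⬝ᵥ (x₁ t - x₂ t)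
        ≤ s₂ * ((x₁ t - x₂ t) ⬝ᵥ S⁻¹ *ᵥ (x₁ t - x₂ t)) := l1
      _ ≤ s₂ * (((x₁ 0 - x₂ 0) ⬝ᵥ S⁻¹ *ᵥ (x₁ 0 - x₂ 0)) * Real.exp (-(s₁ / μ * t))) :=
          mul_le_mul_of_nonneg_left hVt hs₂
      _ ≤ s₂ * (((x₁ 0 - x₂ 0) ⬝ᵥ (x₁ 0 - x₂ 0)) / s₁ * Real.exp (-(s₁ / μ * t))) :=
          mul_le_mul_of_nonneg_left c3 hs₂
      _ = s₂ / s₁ * Real.exp (-(s₁ / μ * t)) * ((x₁ 0 - x₂ 0) ⬝ᵥ (x₁ 0 - x₂ 0)) := by ring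
  show Real.sqrt _ ≤ _
  have hEp := (Real.exp_pos (-(s₁ / μ * t))).le
  have hss : (0:ℝ) ≤ s₂ / s₁ := div_nonneg (le_of_lt (hs₁.trans_le hs₁₂)) hs₁.le
  calc Real.sqrt ((x₁ t - x₂ t) ⬝ᵥ (x₁ t - x₂ t))
      ≤ Real.sqrt (s₂ / s₁ * Real.exp (-(s₁ / μ * t)) * ((x₁ 0 - x₂ 0) ⬝ᵥ (x₁ 0 - x₂ 0))) :=
        Real.sqrt_le_sqrt hA
    _ = Real.sqrt (s₂ / s₁) * Real.sqrt (Real.exp (-(s₁ / μ * t)))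
        * Real.sqrt ((x₁ 0 - x₂ 0) ⬝ᵥ (x₁ 0 - x₂ 0)) := by
        rw [Real.sqrt_mul (mul_nonneg hss hEp), Real.sqrt_mul hss]
    _ = Real.sqrt (s₂ / s₁) * Real.exp (-(s₁ / (2 * μ)) * t)
        * Real.sqrt ((x₁ 0 - x₂ 0) ⬝ᵥ (x₁ 0 - x₂ 0)) := by
        have harg : Real.exp (-(s₁ / μ * t) / 2) = Real.exp (-(s₁ / (2 * μ)) * t) := by
          congr 1
          rw [neg_div, neg_mul, neg_inj, div_mul_eq_mul_div, div_div,
            div_mul_eq_mul_div, mul_comm μ 2]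
        rw [← Real.exp_half, harg]
    _ = Real.sqrt (s₂ / s₁) * Real.exp (-(s₁ / (2 * μ)) * t) * eNorm (x₁ 0 - x₂ 0) := rfl
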